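/- Let λ, A, B ∈ ℂ with |λ| > 1 and A, B ≠ 0, and for n ∈ ℤ set yₙ = Aλⁿ + Bλ⁻ⁿ. Assume yₙ ≠ 0 for all n ∈ ℤ. Then the family (1/(yₙ y_{n+1}))_{n ∈ ℤ} is summable and ∑_{n ∈ ℤ} 1/(yₙ y_{n+1}) = 1/(AB(λ − λ⁻¹)). -/

import Mathlib

open Filter Finset Topology Asymptotics

private lemma key_id' (lam A B w : ℂ) (hlam : lam ≠ 0) (hw : w ≠ 0) (hA : A ≠ 0)
    (hd : lam - lam⁻¹ ≠ 0) (h1 : A*w + B*w⁻¹ ≠ 0) (h2 : A*(w*lam) + B*(w*lam)⁻¹ ≠ 0) :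
    1/((A*w + B*w⁻¹)*(A*(w*lam) + B*(w*lam)⁻¹)) =
      (1/(A*(lam - lam⁻¹))) * (1/(A*w^2 + B) - 1/(A*(w*lam)^2 + B)) := by
  have e1 : A*w + B*w⁻¹ = w⁻¹ * (A*w^2 + B) := by field_simp
  have e2 : A*(w*lam) + B*(w*lam)⁻¹ = (w*lam)⁻¹ * (A*(w*lam)^2 + B) := by
    field_simp
  have h3 : A*w^2 + B ≠ 0 := by
    intro h; apply h1; rw [e1, h, mul_zero]
  have h4 : A*(w*lam)^2 + B ≠ 0 := by
    intro h; apply h2; rw [e2, h, mul_zero]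
  have hd3 : lam - lam⁻¹ = (lam^2 - 1) * lam⁻¹ := by field_simp
  have hd2 : lam^2 - 1 ≠ 0 := by
    intro h; apply hd; rw [hd3, h, zero_mul]
  rw [e1, e2, div_sub_div _ _ h3 h4, hd3]
  field_simp
  ring

theorem hasSum_one_div_y_mul_y_succ_int (lam A B : ℂ) (hlam : 1 < ‖lam‖)
    (hA : A ≠ 0) (hB : B ≠ 0) (y : ℤ → ℂ)
    (hy : ∀ n : ℤ, y n = A * lam ^ n + B * lam⁻¹ ^ n)
    (hy0 : ∀ n : ℤ, y n ≠ 0) :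
    HasSum (fun n : ℤ => 1 / (y n * y (n + 1))) (1 / (A * B * (lam - lam⁻¹))) := by
  have habs : (1:ℝ) < ‖lam‖ := hlam
  have hlam0 : lam ≠ 0 := by
    intro h; rw [h] at habs; simp at habs; linarith
  have hd : lam - lam⁻¹ ≠ 0 := by
    intro h
    have h1 : lam = lam⁻¹ := sub_eq_zero.mp h
    have h2 : lam * lam = 1 := by
      nth_rewrite 1 [h1]; exact inv_mul_cancel₀ hlam0
    have h3 := congrArg norm h2
    rw [norm_mul, norm_one] at h3
    nlinarith [h3, habs]
  -- generic algebraic facts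
  have fact1 : ∀ w : ℂ, w ≠ 0 → A*w + B*w⁻¹ = w⁻¹*(A*w^2+B) := by
    intro w hw; field_simp
  have fact2 : ∀ w : ℂ, w ≠ 0 → A*w⁻¹ + B*w = w⁻¹*(A + B*w^2) := by
    intro w hw; field_simp
  have fact3 : ∀ w : ℂ, w ≠ 0 → A + B*(w^2)⁻¹ = (w^2)⁻¹ * (A*w^2+B) := by
    intro w hw; field_simp
  have fact4 : ∀ w : ℂ, w ≠ 0 → A*(w^2)⁻¹ + B = (w^2)⁻¹ * (A + B*w^2) := by
    intro w hw; field_simp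
  set z : ℂ := lam⁻¹ ^ 2 with hzdef
  have hinv : ‖lam⁻¹‖ < 1 := by
    rw [norm_inv, inv_lt_one_iff₀]; right; exact habs
  have hz : ‖z‖ < 1 := by
    rw [hzdef, norm_pow]
    exact pow_lt_one₀ (norm_nonneg _) hinv (by norm_num)
  have hzw : ∀ n : ℕ, z ^ n = ((lam ^ n) ^ 2)⁻¹ := by
    intro n
    rw [hzdef, ← inv_pow, ← inv_pow, pow_right_comm]
  set c : ℂ := 1/(A*(lam - lam⁻¹)) with hcdef
  set U : ℤ → ℂ := fun n => 1/(A*(lam ^ n)^2 + B) with hUdef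
  have hwz : ∀ n : ℤ, (lam : ℂ) ^ n ≠ 0 := fun n => zpow_ne_zero n hlam0
  have hwn : ∀ n : ℕ, (lam : ℂ) ^ n ≠ 0 := fun n => pow_ne_zero n hlam0
  have hP : ∀ n : ℤ, A*(lam ^ n)^2 + B ≠ 0 := by
    intro n h
    apply hy0 n
    rw [hy n, inv_zpow, fact1 _ (hwz n), h, mul_zero]
  have hP2 : ∀ n : ℤ, A + B*(lam ^ n)^2 ≠ 0 := by
    intro n h
    apply hy0 (-n)
    rw [hy (-n), inv_zpow, zpow_neg, inv_inv, fact2 _ (hwz n), h, mul_zero]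
  have hPnat : ∀ n : ℕ, A*(lam ^ n)^2 + B ≠ 0 := by
    intro n; have := hP n; rwa [zpow_natCast] at this
  have hP2nat : ∀ n : ℕ, A + B*(lam ^ n)^2 ≠ 0 := by
    intro n; have := hP2 n; rwa [zpow_natCast] at this
  -- key telescoping identity
  have hfu : ∀ n : ℤ, 1/(y n * y (n+1)) = c * (U n - U (n+1)) := by
    intro n
    have h1 := hy0 n
    have h2 := hy0 (n+1)
    rw [hy n] at h1
    rw [hy (n+1)] at h2
    rw [hy n, hy (n+1)]
    simp only [inv_zpow] at h1 h2 ⊢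
    rw [zpow_add_one₀ hlam0 n] at h2 ⊢
    simp only [hUdef, hcdef, zpow_add_one₀ hlam0 n]
    exact key_id' lam A B (lam ^ n) hlam0 (hwz n) hA hd h1 h2
  -- closed forms
  have hQpos : ∀ n : ℕ, A + B * z ^ n ≠ 0 := by
    intro n
    rw [hzw n, fact3 _ (hwn n)]
    exact mul_ne_zero (inv_ne_zero (pow_ne_zero 2 (hwn n))) (hPnat n)
  have hQneg : ∀ n : ℕ, A * z ^ n + B ≠ 0 := by
    intro n
    rw [hzw n, fact4 _ (hwn n)]
    exact mul_ne_zero (inv_ne_zero (pow_ne_zero 2 (hwn n))) (hP2nat n)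
  have hupos : ∀ n : ℕ, U (n : ℤ) = z ^ n / (A + B * z ^ n) := by
    intro n
    simp only [hUdef]
    rw [zpow_natCast, hzw n, fact3 _ (hwn n)]
    rw [show ((lam^n)^2)⁻¹ / (((lam^n)^2)⁻¹ * (A*(lam^n)^2+B))
        = ((lam^n)^2)⁻¹ * 1 / (((lam^n)^2)⁻¹ * (A*(lam^n)^2+B)) by rw [mul_one]]
    rw [mul_div_mul_left _ _ (inv_ne_zero (pow_ne_zero 2 (hwn n)))]
  have huneg : ∀ n : ℕ, U (-(n : ℤ)) = 1 / (A * z ^ n + B) := by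
    intro n
    simp only [hUdef]
    rw [zpow_neg, zpow_natCast, inv_pow, ← hzw n]
  -- limits
  have hzlim : Tendsto (fun n:ℕ => z^n) atTop (𝓝 0) :=
    tendsto_pow_atTop_nhds_zero_of_norm_lt_one hz
  have hApos : Tendsto (fun n:ℕ => A + B * z^n) atTop (𝓝 A) := by
    have h' : Tendsto (fun n:ℕ => A + B * z^n) atTop (𝓝 (A + B*0)) :=
      Tendsto.add tendsto_const_nhds (Tendsto.mul tendsto_const_nhds hzlim)
    rwa [mul_zero, add_zero] at h'
  have Lpos : Tendsto (fun n:ℕ => U (n:ℤ)) atTop (𝓝 0) := by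
    have := hzlim.div hApos hA
    rw [zero_div] at this
    exact this.congr fun n => (hupos n).symm
  have hBneg : Tendsto (fun n:ℕ => A * z^n + B) atTop (𝓝 B) := by
    have h' : Tendsto (fun n:ℕ => A * z^n + B) atTop (𝓝 (A*0 + B)) :=
      Tendsto.add (Tendsto.mul tendsto_const_nhds hzlim) tendsto_const_nhds
    rwa [mul_zero, zero_add] at h'
  have Lneg : Tendsto (fun n:ℕ => U (-(n:ℤ))) atTop (𝓝 (1/B)) := by
    have h' : Tendsto (fun n:ℕ => (1:ℂ) / (A * z^n + B)) atTop (𝓝 (1/B)) :=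
      Tendsto.div tendsto_const_nhds hBneg hB
    exact h'.congr fun n => (huneg n).symm
  -- positive side: product form, summability, HasSum
  have hfp_split : ∀ n : ℕ, 1/(y (n:ℤ) * y ((n:ℤ)+1))
      = z^n * (c * ((A + B*z^n)⁻¹ - z*(A + B*z^(n+1))⁻¹)) := by
    intro n
    rw [hfu (n:ℤ), show ((n:ℤ)+1) = ((n+1:ℕ):ℤ) by push_cast; ring,
      hupos n, hupos (n+1), div_eq_mul_inv, div_eq_mul_inv]
    ring
  have hglim : Tendsto (fun n:ℕ => c * ((A + B*z^n)⁻¹ - z*(A + B*z^(n+1))⁻¹))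
      atTop (𝓝 (c * (A⁻¹ - z*A⁻¹))) := by
    have h1 : Tendsto (fun n:ℕ => A + B*z^(n+1)) atTop (𝓝 A) :=
      (hApos.comp (tendsto_add_atTop_nat 1)).congr fun n => rfl
    exact tendsto_const_nhds.mul ((hApos.inv₀ hA).sub
      (tendsto_const_nhds.mul (h1.inv₀ hA)))
  have hgeo : Summable (fun n:ℕ => ‖z‖^n) :=
    summable_geometric_of_lt_one (norm_nonneg z) hz
  have hzO : (fun n:ℕ => (z^n : ℂ)) =O[atTop] (fun n:ℕ => ‖z‖^n) := by
    apply isBigO_of_le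
    intro n
    simp [norm_pow]
  have hsp : Summable (fun n:ℕ => 1/(y (n:ℤ) * y ((n:ℤ)+1))) := by
    apply summable_of_isBigO_nat hgeo
    have h3 := hzO.mul (hglim.isBigO_one ℝ)
    simp only [mul_one] at h3
    exact h3.congr' (Eventually.of_forall fun n => (hfp_split n).symm)
      (Eventually.of_forall fun n => rfl)
  have hps : ∀ N:ℕ, ∑ i ∈ range N, 1/(y (i:ℤ) * y ((i:ℤ)+1)) = c * U ((0:ℕ):ℤ) - c * U ((N:ℕ):ℤ) := by
    intro N
    calc ∑ i ∈ range N, 1/(y (i:ℤ) * y ((i:ℤ)+1))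
        = ∑ i ∈ range N, (c * U ((i:ℕ):ℤ) - c * U ((i+1:ℕ):ℤ)) := by
          refine sum_congr rfl fun i _ => ?_
          rw [hfu (i:ℤ), show ((i:ℤ)+1) = ((i+1:ℕ):ℤ) by push_cast; ring, mul_sub]
      _ = c * U ((0:ℕ):ℤ) - c * U ((N:ℕ):ℤ) := sum_range_sub' (fun i => c * U ((i:ℕ):ℤ)) N
  have hpos : HasSum (fun n:ℕ => 1/(y (n:ℤ) * y ((n:ℤ)+1))) (c * U 0) := by
    rw [hsp.hasSum_iff_tendsto_nat]
    have h' : Tendsto (fun N:ℕ => c * U ((0:ℕ):ℤ) - c * U ((N:ℕ):ℤ)) atTop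
        (𝓝 (c * U ((0:ℕ):ℤ) - c * 0)) :=
      Tendsto.sub tendsto_const_nhds (Tendsto.mul tendsto_const_nhds Lpos)
    rw [mul_zero, sub_zero] at h'
    have h'' := h'.congr fun N => (hps N).symm
    simpa using h''
  -- negative side
  have hmeq : ∀ n:ℕ, 1/(y (-((n:ℤ)+1)) * y (-((n:ℤ)+1)+1))
      = c * (U (-((n+1:ℕ):ℤ)) - U (-(n:ℤ))) := by
    intro n
    have e1 : (-((n:ℤ)+1)) = -((n+1:ℕ):ℤ) := by push_cast; ring
    have e2 : (-((n:ℤ)+1)) + 1 = -(n:ℤ) := by ring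
    rw [hfu (-((n:ℤ)+1)), e2, e1]
  have hfm_split : ∀ n:ℕ, c * (U (-((n+1:ℕ):ℤ)) - U (-(n:ℤ)))
      = z^n * (c * (A*(1-z)) * ((A*z^(n+1)+B) * (A*z^n+B))⁻¹) := by
    intro n
    rw [huneg (n+1), huneg n, one_div, one_div, inv_sub_inv (hQneg (n+1)) (hQneg n),
      div_eq_mul_inv]
    ring
  have hklim : Tendsto (fun n:ℕ => c * (A*(1-z)) * ((A*z^(n+1)+B) * (A*z^n+B))⁻¹)
      atTop (𝓝 (c * (A*(1-z)) * (B*B)⁻¹)) := by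
    have h1 : Tendsto (fun n:ℕ => A*z^(n+1)+B) atTop (𝓝 B) :=
      (hBneg.comp (tendsto_add_atTop_nat 1)).congr fun n => rfl
    exact tendsto_const_nhds.mul ((h1.mul hBneg).inv₀ (mul_ne_zero hB hB))
  have hsm : Summable (fun n:ℕ => 1/(y (-((n:ℤ)+1)) * y (-((n:ℤ)+1)+1))) := by
    apply summable_of_isBigO_nat hgeo
    have h3 := hzO.mul (hklim.isBigO_one ℝ)
    simp only [mul_one] at h3
    exact h3.congr' (Eventually.of_forall fun n => ((hmeq n).trans (hfm_split n)).symm)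
      (Eventually.of_forall fun n => rfl)
  have hms : ∀ N:ℕ, ∑ i ∈ range N, 1/(y (-((i:ℤ)+1)) * y (-((i:ℤ)+1)+1))
      = c * U (-((N:ℕ):ℤ)) - c * U (-((0:ℕ):ℤ)) := by
    intro N
    calc ∑ i ∈ range N, 1/(y (-((i:ℤ)+1)) * y (-((i:ℤ)+1)+1))
        = ∑ i ∈ range N, (c * U (-((i+1:ℕ):ℤ)) - c * U (-((i:ℕ):ℤ))) := by
          refine sum_congr rfl fun i _ => ?_
          rw [hmeq i, mul_sub]
      _ = c * U (-((N:ℕ):ℤ)) - c * U (-((0:ℕ):ℤ)) :=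
          sum_range_sub (fun i => c * U (-((i:ℕ):ℤ))) N
  have hneg : HasSum (fun n:ℕ => 1/(y (-((n:ℤ)+1)) * y (-((n:ℤ)+1)+1)))
      (c * (1/B) - c * U 0) := by
    rw [hsm.hasSum_iff_tendsto_nat]
    have h' : Tendsto (fun N:ℕ => c * U (-((N:ℕ):ℤ)) - c * U (-((0:ℕ):ℤ))) atTop
        (𝓝 (c * (1/B) - c * U (-((0:ℕ):ℤ)))) :=
      Tendsto.sub (Tendsto.mul tendsto_const_nhds Lneg) tendsto_const_nhds
    have h'' := h'.congr fun N => (hms N).symm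
    simpa using h''
  -- combine
  have htotal : HasSum (fun n : ℤ => 1 / (y n * y (n + 1)))
      (c * U 0 + (c * (1/B) - c * U 0)) :=
    HasSum.of_nat_of_neg_add_one hpos hneg
  have hval : c * U 0 + (c * (1/B) - c * U 0) = 1 / (A * B * (lam - lam⁻¹)) := by
    have : c * U 0 + (c * (1/B) - c * U 0) = c * (1/B) := by ring
    rw [this, hcdef, div_mul_div_comm, one_mul]
    congr 1
    ring
  rwa [hval] at htotal
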